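/- arXiv:2603.29619 — 3 statements merged into one kernel-verified Lean document; each statement's English description precedes it below -/
import Mathlib

section
/- For the polytropic family with scaling function P, s(ρ,θ)=S(ρ/θ^{1/(γ-1)}) where S'(Z) = -(1/(γ-1))·(γP(Z)-P'(Z)Z)/Z², together with the corresponding p and e, satisfies Gibbs' relations θ ∂_θ s = ∂_θ e and θ ∂_ρ s = ∂_ρ e - p/ρ² for all ρ>0, θ>0. -/
open Real

/-- Gibbs' relations for the polytropic family with general scaling function `P`
and entropy `s(ρ,θ) = S(ρ/θ^{1/(γ-1)})` where
`S'(Z) = -(1/(γ-1)) (γ P(Z) - P'(Z) Z)/Z²`. -/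
theorem gibbs_polytropic (γ : ℝ) (hγ : 1 < γ) (P S : ℝ → ℝ)
    (hP : ∀ Z : ℝ, 0 < Z → DifferentiableAt ℝ P Z)
    (hS : ∀ Z : ℝ, 0 < Z →
      HasDerivAt S (-(1 / (γ - 1)) * (γ * P Z - deriv P Z * Z) / Z ^ 2) Z)
    (p e s : ℝ → ℝ → ℝ)
    (hp : ∀ ρ θ, 0 < ρ → 0 < θ →
      p ρ θ = θ ^ (γ / (γ - 1)) * P (ρ / θ ^ (1 / (γ - 1))))
    (he : ∀ ρ θ, 0 < ρ → 0 < θ →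
      e ρ θ = θ ^ (γ / (γ - 1)) / ((γ - 1) * ρ) * P (ρ / θ ^ (1 / (γ - 1))))
    (hs : ∀ ρ θ, 0 < ρ → 0 < θ → s ρ θ = S (ρ / θ ^ (1 / (γ - 1)))) :
    ∀ ρ θ : ℝ, 0 < ρ → 0 < θ →
      θ * deriv (fun t => s ρ t) θ = deriv (fun t => e ρ t) θ ∧
      θ * deriv (fun r => s r θ) ρ = deriv (fun r => e r θ) ρ - p ρ θ / ρ ^ 2 := by
  intro ρ θ hρ hθ
  have hγ1 : (0:ℝ) < γ - 1 := by linarith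
  set β : ℝ := 1 / (γ - 1) with hβdef
  have hβ : 0 < β := by positivity
  have hθβ : 0 < θ ^ β := rpow_pos_of_pos hθ β
  set Z : ℝ := ρ / θ ^ β with hZdef
  have hZ : 0 < Z := div_pos hρ hθβ
  set c : ℝ := γ / (γ - 1) with hcdef
  have hc : c = β + 1 := by rw [hcdef, hβdef]; field_simp; ring
  have hθc : θ ^ c = θ ^ β * θ := by
    rw [hc, rpow_add hθ, rpow_one]
  have hθc1 : θ ^ (c - 1) = θ ^ β := by
    rw [hc]; ring_nf
  have hθnb : θ ^ (-β) = (θ ^ β)⁻¹ := rpow_neg hθ.le β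
  have hθnb1 : θ ^ (-β - 1) = (θ ^ β * θ)⁻¹ := by
    rw [show -β - 1 = -(β + 1) by ring, rpow_neg hθ.le, rpow_add hθ, rpow_one]
  have hZθ : ρ * θ ^ (-β) = Z := by
    rw [hθnb, hZdef, div_eq_mul_inv]
  set D : ℝ := -(1 / (γ - 1)) * (γ * P Z - deriv P Z * Z) / Z ^ 2 with hDdef
  have hSZ : HasDerivAt S D (ρ * θ ^ (-β)) := by rw [hZθ]; exact hS Z hZ
  have hPZ : HasDerivAt P (deriv P Z) (ρ * θ ^ (-β)) := by
    rw [hZθ]; exact (hP Z hZ).hasDerivAt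
  have hposθ : ∀ᶠ t : ℝ in nhds θ, (0:ℝ) < t := eventually_gt_nhds hθ
  have hposρ : ∀ᶠ r : ℝ in nhds ρ, (0:ℝ) < r := eventually_gt_nhds hρ
  have h1 : (θ:ℝ) ≠ 0 := hθ.ne'
  have h3 : ρ ≠ 0 := hρ.ne'
  have h4 : γ - 1 ≠ 0 := hγ1.ne'
  constructor
  · -- θ-direction
    have hZt : HasDerivAt (fun t : ℝ => ρ * t ^ (-β)) (ρ * (-β * θ ^ (-β - 1))) θ :=
      (Real.hasDerivAt_rpow_const (Or.inl hθ.ne')).const_mul ρ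
    have hsD : HasDerivAt (fun t : ℝ => S (ρ * t ^ (-β)))
        (D * (ρ * (-β * θ ^ (-β - 1)))) θ := hSZ.comp θ hZt
    have hsev : (fun t => s ρ t) =ᶠ[nhds θ] fun t => S (ρ * t ^ (-β)) := by
      filter_upwards [hposθ] with t ht
      rw [hs ρ t hρ ht, rpow_neg ht.le, div_eq_mul_inv]
    have hsderiv : deriv (fun t => s ρ t) θ = D * (ρ * (-β * θ ^ (-β - 1))) :=
      hsev.deriv_eq.trans hsD.deriv
    have hpow : HasDerivAt (fun t : ℝ => t ^ c) (c * θ ^ (c - 1)) θ :=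
      Real.hasDerivAt_rpow_const (Or.inl hθ.ne')
    have heD : HasDerivAt (fun t : ℝ => t ^ c / ((γ - 1) * ρ) * P (ρ * t ^ (-β)))
        (c * θ ^ (c - 1) / ((γ - 1) * ρ) * P (ρ * θ ^ (-β)) +
          θ ^ c / ((γ - 1) * ρ) * (deriv P Z * (ρ * (-β * θ ^ (-β - 1))))) θ :=
      (hpow.div_const _).mul (hPZ.comp θ hZt)
    have heev : (fun t => e ρ t) =ᶠ[nhds θ] fun t => t ^ c / ((γ - 1) * ρ) * P (ρ * t ^ (-β)) := by
      filter_upwards [hposθ] with t ht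
      rw [he ρ t hρ ht, rpow_neg ht.le, div_eq_mul_inv ρ]
    have hederiv : deriv (fun t => e ρ t) θ =
        c * θ ^ (c - 1) / ((γ - 1) * ρ) * P (ρ * θ ^ (-β)) +
          θ ^ c / ((γ - 1) * ρ) * (deriv P Z * (ρ * (-β * θ ^ (-β - 1)))) :=
      heev.deriv_eq.trans heD.deriv
    rw [hsderiv, hederiv, hZθ, hDdef, hθc, hθc1, hθnb1, hc, hZdef]
    have hA : (θ:ℝ) ^ β ≠ 0 := hθβ.ne'
    generalize θ ^ β = A at hA ⊢
    rw [hβdef]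
    field_simp
    ring
  · -- ρ-direction
    have hZr : HasDerivAt (fun r : ℝ => r * θ ^ (-β)) (θ ^ (-β)) ρ :=
      hasDerivAt_mul_const _
    have hsD : HasDerivAt (fun r : ℝ => S (r * θ ^ (-β))) (D * θ ^ (-β)) ρ :=
      hSZ.comp ρ hZr
    have hsev : (fun r => s r θ) =ᶠ[nhds ρ] fun r => S (r * θ ^ (-β)) := by
      filter_upwards [hposρ] with r hr
      rw [hs r θ hr hθ, rpow_neg hθ.le, div_eq_mul_inv]
    have hsderiv : deriv (fun r => s r θ) ρ = D * θ ^ (-β) :=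
      hsev.deriv_eq.trans hsD.deriv
    have hden : HasDerivAt (fun r : ℝ => (γ - 1) * r) (γ - 1) ρ := by
      simpa using (hasDerivAt_id ρ).const_mul (γ - 1)
    have hne : (γ - 1) * ρ ≠ 0 := by positivity
    have hnum : HasDerivAt (fun _ : ℝ => θ ^ c) 0 ρ := hasDerivAt_const ρ _
    have hfrac : HasDerivAt (fun r : ℝ => θ ^ c / ((γ - 1) * r))
        ((0 * ((γ - 1) * ρ) - θ ^ c * (γ - 1)) / ((γ - 1) * ρ) ^ 2) ρ :=
      hnum.div hden hne
    have heD : HasDerivAt (fun r : ℝ => θ ^ c / ((γ - 1) * r) * P (r * θ ^ (-β)))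
        ((0 * ((γ - 1) * ρ) - θ ^ c * (γ - 1)) / ((γ - 1) * ρ) ^ 2 * P (ρ * θ ^ (-β)) +
          θ ^ c / ((γ - 1) * ρ) * (deriv P Z * θ ^ (-β))) ρ :=
      hfrac.mul (hPZ.comp ρ hZr)
    have heev : (fun r => e r θ) =ᶠ[nhds ρ] fun r => θ ^ c / ((γ - 1) * r) * P (r * θ ^ (-β)) := by
      filter_upwards [hposρ] with r hr
      rw [he r θ hr hθ, rpow_neg hθ.le, div_eq_mul_inv r]
    have hederiv : deriv (fun r => e r θ) ρ =
        (0 * ((γ - 1) * ρ) - θ ^ c * (γ - 1)) / ((γ - 1) * ρ) ^ 2 * P (ρ * θ ^ (-β)) +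
          θ ^ c / ((γ - 1) * ρ) * (deriv P Z * θ ^ (-β)) :=
      heev.deriv_eq.trans heD.deriv
    rw [hsderiv, hederiv, hp ρ θ hρ hθ, hZθ, hDdef, hθc, hθnb, hZdef]
    have hA : (θ:ℝ) ^ β ≠ 0 := hθβ.ne'
    generalize θ ^ β = A at hA ⊢
    field_simp
    ring
end

section
/- The internal energy (ρ,S) ↦ ρ^γ exp(S/(c_v ρ)) is strictly convex on the open set {ρ>0, S∈ℝ}: its Hessian is positive definite at every point. -/
open Real

noncomputable def psi0 (γ ρ S a b t : ℝ) : ℝ :=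
  γ * Real.log (ρ + t * a) + (γ - 1) * (S + t * b) / (ρ + t * a)

noncomputable def psi1 (γ ρ S a b t : ℝ) : ℝ :=
  γ * a / (ρ + t * a) + (γ - 1) * b / (ρ + t * a)
    - (γ - 1) * a * (S + t * b) / (ρ + t * a) ^ 2

noncomputable def psi2 (γ ρ S a b t : ℝ) : ℝ :=
  -(γ * a ^ 2) / (ρ + t * a) ^ 2 - 2 * (γ - 1) * a * b / (ρ + t * a) ^ 2
    + 2 * (γ - 1) * a ^ 2 * (S + t * b) / (ρ + t * a) ^ 3

lemma hasDerivAt_r (ρ a t : ℝ) : HasDerivAt (fun t : ℝ => ρ + t * a) a t := by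
  simpa using ((hasDerivAt_id t).mul_const a).const_add ρ

lemma hasDerivAt_psi0 (γ ρ S a b t : ℝ) (h : 0 < ρ + t * a) :
    HasDerivAt (psi0 γ ρ S a b) (psi1 γ ρ S a b t) t := by
  have hr := hasDerivAt_r ρ a t
  have hs : HasDerivAt (fun t : ℝ => (γ - 1) * (S + t * b)) ((γ - 1) * b) t := by
    simpa using (((hasDerivAt_id t).mul_const b).const_add S).const_mul (γ - 1)
  have hlog := (hr.log h.ne').const_mul γ
  have hdiv := hs.div hr h.ne'
  have hh := hlog.add hdiv
  have : γ * (a / (ρ + t * a)) +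
      ((γ - 1) * b * (ρ + t * a) - (γ - 1) * (S + t * b) * a) / (ρ + t * a) ^ 2
        = psi1 γ ρ S a b t := by
    unfold psi1; field_simp; ring
  rw [this] at hh
  exact hh

lemma hasDerivAt_psi1 (γ ρ S a b t : ℝ) (h : 0 < ρ + t * a) :
    HasDerivAt (psi1 γ ρ S a b) (psi2 γ ρ S a b t) t := by
  have hr := hasDerivAt_r ρ a t
  have hr2 : HasDerivAt (fun t : ℝ => (ρ + t * a) ^ 2) (2 * (ρ + t * a) * a) t := by
    simpa using (hr.fun_pow 2)
  have hs : HasDerivAt (fun t : ℝ => (γ - 1) * a * (S + t * b)) ((γ - 1) * a * b) t := by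
    simpa using (((hasDerivAt_id t).mul_const b).const_add S).const_mul ((γ - 1) * a)
  have h1 := (hasDerivAt_const t (γ * a)).div hr h.ne'
  have h2 := (hasDerivAt_const t ((γ - 1) * b)).div hr h.ne'
  have h3 := hs.div hr2 (pow_ne_zero 2 h.ne')
  have hh := (h1.add h2).sub h3
  have heq : (0 * (ρ + t * a) - γ * a * a) / (ρ + t * a) ^ 2 +
        (0 * (ρ + t * a) - (γ - 1) * b * a) / (ρ + t * a) ^ 2 -
        ((γ - 1) * a * b * (ρ + t * a) ^ 2 -
            (γ - 1) * a * (S + t * b) * (2 * (ρ + t * a) * a)) / ((ρ + t * a) ^ 2) ^ 2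
      = psi2 γ ρ S a b t := by
    unfold psi2; field_simp; ring
  rw [heq] at hh
  exact hh

lemma quad_pos (γ ρ S a b t : ℝ) (hγ : 1 < γ) (ht : 0 < ρ + t * a) (hab : a ≠ 0 ∨ b ≠ 0) :
    0 < psi2 γ ρ S a b t + psi1 γ ρ S a b t ^ 2 := by
  have hk : 0 < γ - 1 := by linarith
  have key : psi2 γ ρ S a b t + psi1 γ ρ S a b t ^ 2 =
      (γ - 1) * a ^ 2 / (ρ + t * a) ^ 2 +
        ((γ - 1) * (a + b) / (ρ + t * a) - (γ - 1) * a * (S + t * b) / (ρ + t * a) ^ 2) ^ 2 := by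
    unfold psi1 psi2; field_simp; ring
  rw [key]
  by_cases ha : a = 0
  · have hb : b ≠ 0 := by tauto
    subst ha
    have : (γ - 1) * (0 + b) / (ρ + t * 0) - (γ - 1) * 0 * (S + t * b) / (ρ + t * 0) ^ 2
        = (γ - 1) * b / (ρ + t * 0) := by ring
    rw [this]
    have h2 : (γ - 1) * b / (ρ + t * 0) ≠ 0 := by
      apply div_ne_zero (mul_ne_zero hk.ne' hb)
      simpa using ht.ne'
    have := pow_pos (abs_pos.mpr h2) 2
    positivity
  · have h1 : 0 < (γ - 1) * a ^ 2 / (ρ + t * a) ^ 2 := by positivity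
    nlinarith [sq_nonneg ((γ - 1) * (a + b) / (ρ + t * a) - (γ - 1) * a * (S + t * b) / (ρ + t * a) ^ 2)]

lemma deriv2_eq (γ ρ S a b : ℝ) (f : ℝ → ℝ)
    (hf : ∀ t, 0 < ρ + t * a → f t = Real.exp (psi0 γ ρ S a b t)) (t : ℝ)
    (ht : 0 < ρ + t * a) :
    deriv (deriv f) t =
      (psi2 γ ρ S a b t + psi1 γ ρ S a b t ^ 2) * Real.exp (psi0 γ ρ S a b t) := by
  have hU : IsOpen {u : ℝ | 0 < ρ + u * a} :=
    isOpen_lt continuous_const (by continuity)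
  have hd1 : ∀ u, 0 < ρ + u * a →
      HasDerivAt f (psi1 γ ρ S a b u * Real.exp (psi0 γ ρ S a b u)) u := by
    intro u hu
    have hg : HasDerivAt (fun u => Real.exp (psi0 γ ρ S a b u))
        (psi1 γ ρ S a b u * Real.exp (psi0 γ ρ S a b u)) u := by
      simpa [mul_comm] using (hasDerivAt_psi0 γ ρ S a b u hu).exp
    apply hg.congr_of_eventuallyEq
    filter_upwards [hU.mem_nhds hu] with x hx using hf x hx
  have hdf : deriv f =ᶠ[nhds t] fun u => psi1 γ ρ S a b u * Real.exp (psi0 γ ρ S a b u) := by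
    filter_upwards [hU.mem_nhds ht] with x hx using (hd1 x hx).deriv
  rw [hdf.deriv_eq]
  have h2 : HasDerivAt (fun u => psi1 γ ρ S a b u * Real.exp (psi0 γ ρ S a b u))
      ((psi2 γ ρ S a b t + psi1 γ ρ S a b t ^ 2) * Real.exp (psi0 γ ρ S a b t)) t := by
    have := (hasDerivAt_psi1 γ ρ S a b t ht).fun_mul (hasDerivAt_psi0 γ ρ S a b t ht).exp
    exact this.congr_deriv (by ring)
  exact h2.deriv

/-- The internal energy `(ρ,S) ↦ ρ^γ exp(S/(c_v ρ))` is strictly convex on the open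
set `{ρ > 0}`, and its Hessian is positive definite at every point: the second
derivative along any nonzero direction is strictly positive. -/
theorem internal_energy_strictly_convex (γ cv : ℝ) (hγ : 1 < γ) (hcv : cv = 1 / (γ - 1))
    (H : ℝ → ℝ → ℝ) (hH : ∀ ρ S : ℝ, 0 < ρ → H ρ S = ρ ^ γ * Real.exp (S / (cv * ρ))) :
    StrictConvexOn ℝ {q : ℝ × ℝ | 0 < q.1} (fun q => H q.1 q.2) ∧
    ∀ ρ S : ℝ, 0 < ρ → ∀ v : ℝ × ℝ, v ≠ 0 →
      0 < iteratedDeriv 2 (fun t : ℝ => H (ρ + t * v.1) (S + t * v.2)) 0 := by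
  have hk : 0 < γ - 1 := by linarith
  -- the key rewriting: H on positives is exp ∘ psi0
  have hHexp : ∀ ρ S : ℝ, 0 < ρ →
      H ρ S = Real.exp (γ * Real.log ρ + (γ - 1) * S / ρ) := by
    intro ρ S hρ
    rw [hH ρ S hρ, Real.rpow_def_of_pos hρ, ← Real.exp_add]
    congr 1
    rw [hcv]
    field_simp
  constructor
  · constructor
    · -- convexity of the set
      intro x hx y hy c d hc hd hcd
      simp only [Set.mem_setOf_eq] at *
      rcases hc.eq_or_lt with h | h
      · have : d = 1 := by linarith
        simpa [← h, this] using hy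
      · have : 0 ≤ d * y.1 := mul_nonneg hd hy.le
        have : 0 < c * x.1 := mul_pos h hx
        simp only [Prod.fst_add, Prod.smul_fst, smul_eq_mul]
        nlinarith
    · rintro p hp q hq hpq c d hc hd hcd
      simp only [Set.mem_setOf_eq] at hp hq
      set a := q.1 - p.1 with ha
      set b := q.2 - p.2 with hb
      set f : ℝ → ℝ := fun t => H (p.1 + t * a) (p.2 + t * b) with hfdef
      have hr : ∀ t ∈ Set.Icc (0:ℝ) 1, 0 < p.1 + t * a := by
        intro t htt
        have h1 : p.1 + t * a = (1 - t) * p.1 + t * q.1 := by rw [ha]; ring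
        rw [h1]
        rcases htt.2.eq_or_lt with h | h
        · simp [h, hq]
        · have : 0 < (1 - t) * p.1 := mul_pos (by linarith) hp
          nlinarith [mul_nonneg htt.1 hq.le]
      have hfeq : ∀ t, 0 < p.1 + t * a → f t = Real.exp (psi0 γ p.1 p.2 a b t) := by
        intro t htp
        rw [hfdef]
        simp only
        rw [hHexp _ _ htp]
        rfl
      have hstrict : StrictConvexOn ℝ (Set.Icc (0:ℝ) 1) f := by
        apply strictConvexOn_of_deriv2_pos (convex_Icc 0 1)
        · have hcg : ContinuousOn (fun t => Real.exp (psi0 γ p.1 p.2 a b t)) (Set.Icc (0:ℝ) 1) :=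
            fun t htt =>
              ((hasDerivAt_psi0 γ p.1 p.2 a b t (hr t htt)).exp.continuousAt).continuousWithinAt
          exact hcg.congr fun t htt => hfeq t (hr t htt)
        · intro x hx
          rw [interior_Icc] at hx
          have hxr : 0 < p.1 + x * a := hr x ⟨hx.1.le, hx.2.le⟩
          have h2 : deriv^[2] f x = deriv (deriv f) x := rfl
          rw [h2, deriv2_eq γ p.1 p.2 a b f hfeq x hxr]
          have hab : a ≠ 0 ∨ b ≠ 0 := by
            by_contra hcon
            push_neg at hcon
            apply hpq
            have h1 : q.1 = p.1 := by have := hcon.1; rw [ha] at this; linarith [sub_eq_zero.mp this]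
            have h2 : q.2 = p.2 := by have := hcon.2; rw [hb] at this; linarith [sub_eq_zero.mp this]
            exact Prod.ext h1.symm h2.symm
          exact mul_pos (quad_pos γ p.1 p.2 a b x hγ hxr hab) (Real.exp_pos _)
      have key := hstrict.2 (Set.left_mem_Icc.mpr zero_le_one)
        (Set.right_mem_Icc.mpr zero_le_one) (by norm_num) hc hd hcd
      have hc1 : c = 1 - d := by linarith
      have e0 : f (c • (0:ℝ) + d • (1:ℝ)) = H ((c • p + d • q).1) ((c • p + d • q).2) := by
        simp only [hfdef, smul_eq_mul, mul_zero, mul_one, zero_add, Prod.fst_add, Prod.snd_add,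
          Prod.smul_fst, Prod.smul_snd, smul_eq_mul]
        rw [ha, hb, hc1]
        ring_nf
      have e1 : f 0 = H p.1 p.2 := by simp [hfdef]
      have e2 : f 1 = H q.1 q.2 := by simp [hfdef, ha, hb]
      rw [e0, e1, e2] at key
      simpa using key
  · intro ρ S hρ v hv
    set a := v.1
    set b := v.2
    have hab : a ≠ 0 ∨ b ≠ 0 := by
      by_contra hcon
      push_neg at hcon
      exact hv (Prod.ext hcon.1 hcon.2)
    set f : ℝ → ℝ := fun t => H (ρ + t * a) (S + t * b) with hfdef
    have hfeq : ∀ t, 0 < ρ + t * a → f t = Real.exp (psi0 γ ρ S a b t) := by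
      intro t htp
      rw [hfdef]
      simp only
      rw [hHexp _ _ htp]
      rfl
    have h0 : 0 < ρ + 0 * a := by simpa using hρ
    have h2 : iteratedDeriv 2 f 0 = deriv (deriv f) 0 := by
      rw [iteratedDeriv_succ, iteratedDeriv_one]
    rw [h2, deriv2_eq γ ρ S a b f hfeq 0 h0]
    exact mul_pos (quad_pos γ ρ S a b 0 hγ h0 hab) (Real.exp_pos _)
end

section
/- The extended internal energy function (ρ,S) ↦ ρ^γ exp(S/(c_v ρ)) for ρ>0, equal to 0 when ρ=0 and S≤0, and +∞ otherwise, is convex and lower semicontinuous on ℝ² with values in [0,∞]. -/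
open Real ENNReal

private lemma pow_div_le_exp (x : ℝ) (hx : 0 ≤ x) (k : ℕ) (hk : 0 < k) :
    (x / k) ^ k ≤ Real.exp x := by
  have hk' : (k : ℝ) ≠ 0 := Nat.cast_ne_zero.2 hk.ne'
  have h1 : x / k ≤ Real.exp (x / k) := by
    have := Real.add_one_le_exp (x / k); linarith
  have h2 : (x / k) ^ k ≤ (Real.exp (x / k)) ^ k :=
    pow_le_pow_left₀ (by positivity) h1 k
  calc (x / k) ^ k ≤ (Real.exp (x / k)) ^ k := h2
    _ = Real.exp (k * (x / k)) := (Real.exp_nat_mul _ k).symm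
    _ = Real.exp x := by rw [mul_div_cancel₀ _ hk']

private lemma energy_convex_pos (γ cv : ℝ) (hγ : 1 < γ) (hcv : cv = 1 / (γ - 1))
    (ρ₁ S₁ ρ₂ S₂ t : ℝ) (h1 : 0 < ρ₁) (h2 : 0 < ρ₂) (ht0 : 0 ≤ t) (ht1 : t ≤ 1) :
    (t * ρ₁ + (1 - t) * ρ₂) ^ γ *
        Real.exp ((t * S₁ + (1 - t) * S₂) / (cv * (t * ρ₁ + (1 - t) * ρ₂)))
      ≤ t * (ρ₁ ^ γ * Real.exp (S₁ / (cv * ρ₁)))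
        + (1 - t) * (ρ₂ ^ γ * Real.exp (S₂ / (cv * ρ₂))) := by
  have hγ0 : (0:ℝ) < γ := by linarith
  have hγ1 : (0:ℝ) < γ - 1 := by linarith
  have hcv0 : 0 < cv := by rw [hcv]; positivity
  set a : ℝ := (γ - 1) / γ with ha
  set s : ℝ := 1 - t with hs
  have hs0 : 0 ≤ s := by simp [hs]; linarith
  set ρ : ℝ := t * ρ₁ + s * ρ₂ with hρdef
  have hρ : 0 < ρ := by
    rcases eq_or_lt_of_le ht0 with h | h
    · have : s = 1 := by simp [hs, ← h]
      simp [hρdef, ← h, this, h2]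
    · have : 0 < t * ρ₁ := mul_pos h h1
      have : 0 ≤ s * ρ₂ := mul_nonneg hs0 h2.le
      nlinarith
  set S : ℝ := t * S₁ + s * S₂ with hSdef
  -- identity: ρ^γ * exp (S/(cv ρ)) = (ρ * exp (a S / ρ))^γ  for ρ > 0
  have ident : ∀ r s' : ℝ, 0 < r →
      (r * Real.exp (a * s' / r)) ^ γ = r ^ γ * Real.exp (s' / (cv * r)) := by
    intro r s' hr
    have he : (Real.exp (a * s' / r)) ^ γ = Real.exp (a * s' / r * γ) :=
      (Real.exp_mul _ _).symm
    rw [Real.mul_rpow hr.le (Real.exp_pos _).le, he]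
    congr 1
    congr 1
    have haγ : a * γ = γ - 1 := by
      rw [ha]; field_simp
    calc a * s' / r * γ = (a * γ) * (s' / r) := by ring
      _ = (γ - 1) * (s' / r) := by rw [haγ]
      _ = s' / (cv * r) := by
          rw [hcv]; field_simp
  set g₁ : ℝ := ρ₁ * Real.exp (a * S₁ / ρ₁) with hg1
  set g₂ : ℝ := ρ₂ * Real.exp (a * S₂ / ρ₂) with hg2
  set g : ℝ := ρ * Real.exp (a * S / ρ) with hg
  have hg₁0 : 0 < g₁ := by positivity
  have hg₂0 : 0 < g₂ := by positivity
  have hg0 : 0 < g := by positivity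
  -- perspective convexity: g ≤ t g₁ + s g₂
  have persp : g ≤ t * g₁ + s * g₂ := by
    set lam : ℝ := t * ρ₁ / ρ with hlam
    set mu : ℝ := s * ρ₂ / ρ with hmu
    have hlam0 : 0 ≤ lam := by positivity
    have hmu0 : 0 ≤ mu := by positivity
    have hsum : lam + mu = 1 := by
      rw [hlam, hmu]; field_simp; exact hρdef.symm
    have harg : a * S / ρ = lam * (a * S₁ / ρ₁) + mu * (a * S₂ / ρ₂) := by
      rw [hlam, hmu, hSdef]
      field_simp
    have hexp := convexOn_exp.2 (Set.mem_univ (a * S₁ / ρ₁)) (Set.mem_univ (a * S₂ / ρ₂))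
      hlam0 hmu0 hsum
    simp only [smul_eq_mul] at hexp
    have : Real.exp (a * S / ρ) ≤ lam * Real.exp (a * S₁ / ρ₁) + mu * Real.exp (a * S₂ / ρ₂) := by
      rw [harg]; exact hexp
    have hmul := mul_le_mul_of_nonneg_left this hρ.le
    calc g = ρ * Real.exp (a * S / ρ) := rfl
      _ ≤ ρ * (lam * Real.exp (a * S₁ / ρ₁) + mu * Real.exp (a * S₂ / ρ₂)) := hmul
      _ = t * g₁ + s * g₂ := by
          rw [hlam, hmu, hg1, hg2]; field_simp
  -- rpow convexity
  have hrpow : (t * g₁ + s * g₂) ^ γ ≤ t * g₁ ^ γ + s * g₂ ^ γ := by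
    have := (convexOn_rpow hγ.le).2 (Set.mem_Ici.2 hg₁0.le) (Set.mem_Ici.2 hg₂0.le)
      ht0 hs0 (by rw [hs]; ring)
    simpa [smul_eq_mul] using this
  have hmono : g ^ γ ≤ (t * g₁ + s * g₂) ^ γ :=
    Real.rpow_le_rpow hg0.le persp hγ0.le
  have := hmono.trans hrpow
  rw [hg, hg1, hg2, ident ρ S hρ, ident ρ₁ S₁ h1, ident ρ₂ S₂ h2] at this
  exact this

/-- The extended internal energy `h(ρ,S) = ρ^γ exp(S/(c_v ρ))` for `ρ > 0`,
`h(0,S) = 0` for `S ≤ 0`, `h = ∞` otherwise, is convex and lower semicontinuous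
on `ℝ²` with values in `[0,∞]`. -/
theorem internal_energy_convex_lsc (γ cv : ℝ) (hγ : 1 < γ) (hcv : cv = 1 / (γ - 1))
    (h : ℝ × ℝ → ℝ≥0∞)
    (hh1 : ∀ ρ S : ℝ, 0 < ρ →
      h (ρ, S) = ENNReal.ofReal (ρ ^ γ * Real.exp (S / (cv * ρ))))
    (hh2 : ∀ S : ℝ, S ≤ 0 → h (0, S) = 0)
    (hh3 : ∀ ρ S : ℝ, ¬ 0 < ρ → ¬ (ρ = 0 ∧ S ≤ 0) → h (ρ, S) = ∞) :
    (∀ x y : ℝ × ℝ, ∀ t : ℝ, 0 ≤ t → t ≤ 1 →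
      h (t • x + (1 - t) • y) ≤ ENNReal.ofReal t * h x + ENNReal.ofReal (1 - t) * h y) ∧
    LowerSemicontinuous h := by
  have hγ1 : (0:ℝ) < γ - 1 := by linarith
  have hcv0 : 0 < cv := by rw [hcv]; positivity
  constructor
  · -- convexity
    rintro ⟨ρ₁, S₁⟩ ⟨ρ₂, S₂⟩ t ht0 ht1
    have hco : t • ((ρ₁, S₁) : ℝ × ℝ) + (1 - t) • ((ρ₂, S₂) : ℝ × ℝ)
        = (t * ρ₁ + (1 - t) * ρ₂, t * S₁ + (1 - t) * S₂) := by
      simp [Prod.smul_mk, Prod.mk_add_mk, smul_eq_mul]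
    rw [hco]
    rcases eq_or_lt_of_le ht0 with rfl | ht0'
    · simp
    rcases eq_or_lt_of_le ht1 with rfl | ht1'
    · simp
    have hs0' : 0 < 1 - t := by linarith
    by_cases hx : h (ρ₁, S₁) = ⊤
    · rw [hx, ENNReal.mul_top (ENNReal.ofReal_pos.2 ht0').ne', top_add]
      exact le_top
    by_cases hy : h (ρ₂, S₂) = ⊤
    · rw [hy, ENNReal.mul_top (ENNReal.ofReal_pos.2 hs0').ne', add_top]
      exact le_top
    have px : 0 < ρ₁ ∨ (ρ₁ = 0 ∧ S₁ ≤ 0) := by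
      by_contra hco'
      push_neg at hco'
      exact hx (hh3 _ _ (not_lt.2 hco'.1)
        (by rintro ⟨h1', h2'⟩; exact absurd h2' (not_le.2 (hco'.2 h1'))))
    have py : 0 < ρ₂ ∨ (ρ₂ = 0 ∧ S₂ ≤ 0) := by
      by_contra hco'
      push_neg at hco'
      exact hy (hh3 _ _ (not_lt.2 hco'.1)
        (by rintro ⟨h1', h2'⟩; exact absurd h2' (not_le.2 (hco'.2 h1'))))
    rcases px with hρ₁ | ⟨hρ₁, hS₁⟩
    · rcases py with hρ₂ | ⟨hρ₂, hS₂⟩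
      · -- both positive: main convexity
        have hρ : 0 < t * ρ₁ + (1 - t) * ρ₂ := by nlinarith
        rw [hh1 _ _ hρ, hh1 _ _ hρ₁, hh1 _ _ hρ₂]
        have key := energy_convex_pos γ cv hγ hcv ρ₁ S₁ ρ₂ S₂ t hρ₁ hρ₂ ht0 ht1
        calc ENNReal.ofReal ((t * ρ₁ + (1 - t) * ρ₂) ^ γ *
              Real.exp ((t * S₁ + (1 - t) * S₂) / (cv * (t * ρ₁ + (1 - t) * ρ₂))))
            ≤ ENNReal.ofReal (t * (ρ₁ ^ γ * Real.exp (S₁ / (cv * ρ₁)))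
              + (1 - t) * (ρ₂ ^ γ * Real.exp (S₂ / (cv * ρ₂)))) :=
              ENNReal.ofReal_le_ofReal key
          _ = ENNReal.ofReal (t * (ρ₁ ^ γ * Real.exp (S₁ / (cv * ρ₁))))
              + ENNReal.ofReal ((1 - t) * (ρ₂ ^ γ * Real.exp (S₂ / (cv * ρ₂)))) := by
              rw [ENNReal.ofReal_add (by positivity) (by positivity)]
          _ = ENNReal.ofReal t * ENNReal.ofReal (ρ₁ ^ γ * Real.exp (S₁ / (cv * ρ₁)))
              + ENNReal.ofReal (1 - t) * ENNReal.ofReal (ρ₂ ^ γ * Real.exp (S₂ / (cv * ρ₂))) := by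
              rw [ENNReal.ofReal_mul ht0, ENNReal.ofReal_mul hs0'.le]
      · -- ρ₂ = 0, S₂ ≤ 0
        subst hρ₂
        have hρ : 0 < t * ρ₁ + (1 - t) * 0 := by
          simp only [mul_zero, add_zero]; exact mul_pos ht0' hρ₁
        rw [hh1 _ _ hρ, hh1 _ _ hρ₁, hh2 _ hS₂]
        simp only [mul_zero, add_zero]
        have hreal : (t * ρ₁) ^ γ * Real.exp ((t * S₁ + (1 - t) * S₂) / (cv * (t * ρ₁)))
            ≤ t * (ρ₁ ^ γ * Real.exp (S₁ / (cv * ρ₁))) := by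
          have e1 : (t * ρ₁) ^ γ = t ^ γ * ρ₁ ^ γ := Real.mul_rpow ht0 hρ₁.le
          have e2 : t ^ γ ≤ t := by
            have := Real.rpow_le_rpow_of_exponent_ge ht0' ht1 hγ.le
            simpa using this
          have e3 : (t * S₁ + (1 - t) * S₂) / (cv * (t * ρ₁)) ≤ S₁ / (cv * ρ₁) := by
            have hpos : 0 < cv * (t * ρ₁) := by positivity
            have hnum : t * S₁ + (1 - t) * S₂ ≤ t * S₁ := by
              nlinarith [mul_nonpos_of_nonneg_of_nonpos hs0'.le hS₂]
            calc (t * S₁ + (1 - t) * S₂) / (cv * (t * ρ₁))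
                ≤ (t * S₁) / (cv * (t * ρ₁)) := by
                  exact div_le_div_of_nonneg_right hnum hpos.le
              _ = S₁ / (cv * ρ₁) := by field_simp
          calc (t * ρ₁) ^ γ * Real.exp ((t * S₁ + (1 - t) * S₂) / (cv * (t * ρ₁)))
              = t ^ γ * (ρ₁ ^ γ * Real.exp ((t * S₁ + (1 - t) * S₂) / (cv * (t * ρ₁)))) := by
                rw [e1]; ring
            _ ≤ t * (ρ₁ ^ γ * Real.exp (S₁ / (cv * ρ₁))) := by
                apply mul_le_mul e2
                · apply mul_le_mul_of_nonneg_left (Real.exp_le_exp.2 e3) (by positivity)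
                · positivity
                · exact ht0
        calc ENNReal.ofReal ((t * ρ₁) ^ γ * Real.exp ((t * S₁ + (1 - t) * S₂) / (cv * (t * ρ₁))))
            ≤ ENNReal.ofReal (t * (ρ₁ ^ γ * Real.exp (S₁ / (cv * ρ₁)))) :=
              ENNReal.ofReal_le_ofReal hreal
          _ = ENNReal.ofReal t * ENNReal.ofReal (ρ₁ ^ γ * Real.exp (S₁ / (cv * ρ₁))) :=
              ENNReal.ofReal_mul ht0
    · rcases py with hρ₂ | ⟨hρ₂, hS₂⟩
      · -- ρ₁ = 0, S₁ ≤ 0, ρ₂ > 0 (symmetric)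
        subst hρ₁
        have hs1 : (1:ℝ) - t ≤ 1 := by linarith
        have hρ : 0 < t * 0 + (1 - t) * ρ₂ := by
          simp only [mul_zero, zero_add]; exact mul_pos hs0' hρ₂
        rw [hh1 _ _ hρ, hh1 _ _ hρ₂, hh2 _ hS₁]
        simp only [mul_zero, zero_add]
        have hreal : ((1 - t) * ρ₂) ^ γ * Real.exp ((t * S₁ + (1 - t) * S₂) / (cv * ((1 - t) * ρ₂)))
            ≤ (1 - t) * (ρ₂ ^ γ * Real.exp (S₂ / (cv * ρ₂))) := by
          have e1 : ((1 - t) * ρ₂) ^ γ = (1 - t) ^ γ * ρ₂ ^ γ := Real.mul_rpow hs0'.le hρ₂.le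
          have e2 : (1 - t) ^ γ ≤ (1 - t) := by
            have := Real.rpow_le_rpow_of_exponent_ge hs0' hs1 hγ.le
            simpa using this
          have e3 : (t * S₁ + (1 - t) * S₂) / (cv * ((1 - t) * ρ₂)) ≤ S₂ / (cv * ρ₂) := by
            have hpos : 0 < cv * ((1 - t) * ρ₂) := by positivity
            have hnum : t * S₁ + (1 - t) * S₂ ≤ (1 - t) * S₂ := by
              nlinarith [mul_nonpos_of_nonneg_of_nonpos ht0 hS₁]
            calc (t * S₁ + (1 - t) * S₂) / (cv * ((1 - t) * ρ₂))
                ≤ ((1 - t) * S₂) / (cv * ((1 - t) * ρ₂)) :=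
                  div_le_div_of_nonneg_right hnum hpos.le
              _ = S₂ / (cv * ρ₂) := by field_simp
          calc ((1 - t) * ρ₂) ^ γ * Real.exp ((t * S₁ + (1 - t) * S₂) / (cv * ((1 - t) * ρ₂)))
              = (1 - t) ^ γ * (ρ₂ ^ γ * Real.exp ((t * S₁ + (1 - t) * S₂) / (cv * ((1 - t) * ρ₂)))) := by
                rw [e1]; ring
            _ ≤ (1 - t) * (ρ₂ ^ γ * Real.exp (S₂ / (cv * ρ₂))) := by
                apply mul_le_mul e2
                · apply mul_le_mul_of_nonneg_left (Real.exp_le_exp.2 e3) (by positivity)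
                · positivity
                · exact hs0'.le
        calc ENNReal.ofReal (((1 - t) * ρ₂) ^ γ *
              Real.exp ((t * S₁ + (1 - t) * S₂) / (cv * ((1 - t) * ρ₂))))
            ≤ ENNReal.ofReal ((1 - t) * (ρ₂ ^ γ * Real.exp (S₂ / (cv * ρ₂)))) :=
              ENNReal.ofReal_le_ofReal hreal
          _ = ENNReal.ofReal (1 - t) * ENNReal.ofReal (ρ₂ ^ γ * Real.exp (S₂ / (cv * ρ₂))) :=
              ENNReal.ofReal_mul hs0'.le
      · -- both zero
        subst hρ₁; subst hρ₂
        have hS : t * S₁ + (1 - t) * S₂ ≤ 0 := by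
          have := mul_nonpos_of_nonneg_of_nonpos ht0 hS₁
          have := mul_nonpos_of_nonneg_of_nonpos hs0'.le hS₂
          linarith
        simp only [mul_zero, add_zero]
        rw [hh2 _ hS]
        exact zero_le
  · -- lower semicontinuity
    intro x
    obtain ⟨ρ₀, S₀⟩ := x
    rcases lt_trichotomy ρ₀ 0 with hρ | hρ | hρ
    · -- ρ₀ < 0 : h = ∞ on a neighborhood
      intro c hc
      have hc' : c < ⊤ := hc.trans_le le_top
      have hev : ∀ᶠ p : ℝ × ℝ in nhds (ρ₀, S₀), p.1 < 0 :=
        (isOpen_lt continuous_fst continuous_const).eventually_mem (by simpa using hρ)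
      filter_upwards [hev] with p hp
      have : h (p.1, p.2) = ⊤ := hh3 _ _ (by linarith) (by rintro ⟨h1, -⟩; linarith [h1 ▸ hp])
      rw [Prod.mk.eta] at this
      rw [this]; exact hc'
    · -- ρ₀ = 0
      subst hρ
      rcases le_or_gt S₀ 0 with hS | hS
      · -- h (0,S₀) = 0 : trivially lsc
        intro c hc
        rw [hh2 _ hS] at hc
        exact absurd hc (ENNReal.not_lt_zero)
      · -- S₀ > 0 : h = ∞, blow-up
        intro c hc
        have hval : h (0, S₀) = ⊤ := hh3 0 S₀ (lt_irrefl 0) (by rintro ⟨-, h2'⟩; linarith)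
        rw [hval] at hc
        have hcne : c ≠ ⊤ := hc.ne
        set M : ℝ := c.toReal + 1 with hM
        have hM0 : 0 < M := by positivity
        have hcM : c < ENNReal.ofReal M :=
          (ENNReal.lt_ofReal_iff_toReal_lt hcne).2 (by simp [hM])
        set k : ℕ := ⌈γ⌉₊ + 1 with hk
        have hk0 : 0 < k := Nat.succ_pos _
        have hkγ : γ + 1 ≤ (k : ℝ) := by
          have := Nat.le_ceil γ
          push_cast [hk]
          linarith
        set C : ℝ := (S₀ / (2 * cv * k)) ^ k with hC
        have hC0 : 0 < C := by
          apply pow_pos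
          have : (0:ℝ) < (k:ℝ) := Nat.cast_pos.2 hk0
          positivity
        set δ : ℝ := min 1 (C / M) with hδ
        have hδ0 : 0 < δ := lt_min one_pos (by positivity)
        have hopen : IsOpen {p : ℝ × ℝ | p.1 < δ ∧ S₀ / 2 < p.2} :=
          (isOpen_lt continuous_fst continuous_const).inter
            (isOpen_lt continuous_const continuous_snd)
        have hmem : ((0:ℝ), S₀) ∈ {p : ℝ × ℝ | p.1 < δ ∧ S₀ / 2 < p.2} :=
          ⟨hδ0, by linarith⟩
        filter_upwards [hopen.eventually_mem hmem] with p hp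
        obtain ⟨hp1, hp2⟩ := hp
        have hS2 : 0 < p.2 := by linarith
        rcases le_or_gt p.1 0 with hple | hpgt
        · have : h (p.1, p.2) = ⊤ := by
            apply hh3 _ _ (not_lt.2 hple)
            rintro ⟨-, h2'⟩; linarith
          rw [Prod.mk.eta] at this
          rw [this]
          exact hcne.lt_top
        · have hval' : h (p.1, p.2) = ENNReal.ofReal (p.1 ^ γ * Real.exp (p.2 / (cv * p.1))) :=
            hh1 _ _ hpgt
          rw [Prod.mk.eta] at hval'
          rw [hval']
          refine hcM.trans_le (ENNReal.ofReal_le_ofReal ?_)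
          -- show M ≤ p.1 ^ γ * exp (p.2 / (cv * p.1))
          have hp1le1 : p.1 ≤ 1 := le_of_lt (hp1.trans_le (min_le_left _ _))
          have hp1leCM : p.1 ≤ C / M := le_of_lt (hp1.trans_le (min_le_right _ _))
          have hcvp : 0 < cv * p.1 := by positivity
          set x : ℝ := S₀ / (2 * (cv * p.1)) with hx
          have hx0 : 0 < x := by positivity
          have e1 : x ≤ p.2 / (cv * p.1) := by
            rw [hx]
            rw [div_le_div_iff₀ (by positivity) hcvp]
            nlinarith
          have e2 : (x / k) ^ k ≤ Real.exp (p.2 / (cv * p.1)) :=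
            (pow_div_le_exp x hx0.le k hk0).trans (Real.exp_le_exp.2 e1)
          have e3 : x / k = (S₀ / (2 * cv * k)) / p.1 := by
            rw [hx, div_div, div_div]
            congr 1
            ring
          have e4 : (x / k) ^ k = C / p.1 ^ k := by
            rw [e3, div_pow, hC]
          have e5 : p.1 ^ γ * (C / p.1 ^ k) = C * (p.1 ^ γ / p.1 ^ (k : ℝ)) := by
            rw [Real.rpow_natCast]
            ring
          have e6 : p.1 ^ γ / p.1 ^ (k:ℝ) = p.1 ^ (γ - k) := (Real.rpow_sub hpgt _ _).symm
          have e7 : p.1 ^ ((-1:ℝ)) ≤ p.1 ^ (γ - k) :=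
            Real.rpow_le_rpow_of_exponent_ge hpgt hp1le1 (by linarith)
          have e8 : p.1 ^ ((-1:ℝ)) = 1 / p.1 := by
            rw [Real.rpow_neg_one]; exact (one_div _).symm
          have e9 : M ≤ C / p.1 := by
            rw [le_div_iff₀ hpgt]
            calc M * p.1 ≤ M * (C / M) := by
                  exact mul_le_mul_of_nonneg_left hp1leCM hM0.le
              _ = C := by field_simp
          have e10 : C / p.1 ≤ C * p.1 ^ (γ - k) := by
            calc C / p.1 = C * (1 / p.1) := by ring
              _ = C * p.1 ^ ((-1:ℝ)) := by rw [e8]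
              _ ≤ C * p.1 ^ (γ - k) := mul_le_mul_of_nonneg_left e7 hC0.le
          calc M ≤ C / p.1 := e9
            _ ≤ C * p.1 ^ (γ - k) := e10
            _ = p.1 ^ γ * (C / p.1 ^ k) := by rw [e5, e6]
            _ = p.1 ^ γ * (x / k) ^ k := by rw [e4]
            _ ≤ p.1 ^ γ * Real.exp (p.2 / (cv * p.1)) :=
                mul_le_mul_of_nonneg_left e2 (Real.rpow_nonneg hpgt.le _)
    · -- ρ₀ > 0 : h is continuous near the point
      intro c hc
      have hcont : ContinuousAt (fun p : ℝ × ℝ =>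
          ENNReal.ofReal (p.1 ^ γ * Real.exp (p.2 / (cv * p.1)))) (ρ₀, S₀) := by
        apply ENNReal.continuous_ofReal.continuousAt.comp
        apply ContinuousAt.mul
        · exact continuousAt_fst.rpow_const (Or.inl hρ.ne')
        · exact Real.continuous_exp.continuousAt.comp
            (continuousAt_snd.div (continuousAt_const.mul continuousAt_fst)
              (by positivity))
      have hval : h (ρ₀, S₀) = ENNReal.ofReal (ρ₀ ^ γ * Real.exp (S₀ / (cv * ρ₀))) :=
        hh1 _ _ hρ
      rw [hval] at hc
      have hev1 : ∀ᶠ p : ℝ × ℝ in nhds (ρ₀, S₀),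
          c < ENNReal.ofReal (p.1 ^ γ * Real.exp (p.2 / (cv * p.1))) :=
        hcont.eventually_mem (isOpen_Ioi.mem_nhds hc)
      have hev2 : ∀ᶠ p : ℝ × ℝ in nhds (ρ₀, S₀), 0 < p.1 :=
        (isOpen_lt continuous_const continuous_fst).eventually_mem (by simpa using hρ)
      filter_upwards [hev1, hev2] with p hp1 hp2
      have : h (p.1, p.2) = ENNReal.ofReal (p.1 ^ γ * Real.exp (p.2 / (cv * p.1))) :=
        hh1 _ _ hp2
      rw [Prod.mk.eta] at this
      rw [this]
      exact hp1
end
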